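/- If i ∈ I^j, then the set Ω^j_{ℓ+1}(i), being a union of at most 2ⁿ open axis-aligned hyperrectangles of the form ∏_k (ξ_{\bar{i}_k}, ξ_{\bar{i}_k + p_k + 1}) with 0 ≤ \bar{i}_k − i_k ≤ 1 componentwise, all containing the common open box ∏_k (ξ_{i_k+1}, ξ_{i_k+2}), is open and star-shaped, hence homeomorphic to an open n-ball. -/

import Mathlib

open Set Metric

/-- A finite nonempty union of bounded-free open convex sets all containing `0`
is homeomorphic to the whole space. -/
theorem aux_starUnion_homeo {E : Type*} [NormedAddCommGroup E] [NormedSpace ℝ E]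
    {ι : Type*} (T : Finset ι) (hT : T.Nonempty) (s : ι → Set E)
    (hopen : ∀ a ∈ T, IsOpen (s a)) (hconv : ∀ a ∈ T, Convex ℝ (s a))
    (h0 : ∀ a ∈ T, (0 : E) ∈ s a) :
    Nonempty (↥(⋃ a ∈ T, s a) ≃ₜ E) := by
  set G : E → ℝ := fun x => T.inf' hT fun a => gauge (s a) x with hG
  have hnhds : ∀ a ∈ T, s a ∈ nhds (0 : E) := fun a ha => (hopen a ha).mem_nhds (h0 a ha)
  have hGcont : Continuous G := by
    rw [continuous_iff_continuousAt]
    intro x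
    exact Filter.Tendsto.finset_inf'_nhds_apply hT fun a ha =>
      (continuous_gauge (hconv a ha) (hnhds a ha)).continuousAt
  have hGnonneg : ∀ x, 0 ≤ G x := fun x => Finset.le_inf' hT _ fun a _ => gauge_nonneg x
  have hGsmul : ∀ (t : ℝ), 0 ≤ t → ∀ x, G (t • x) = t * G x := by
    intro t ht x
    have h1 : (fun a => gauge (s a) (t • x)) = fun a => t * gauge (s a) x := by
      funext a; rw [gauge_smul_of_nonneg ht, smul_eq_mul]
    rw [hG]
    simp only [h1]
    exact (Finset.apply_inf'_eq_inf'_comp hT (fun r => t * r)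
      (fun u v => mul_min_of_nonneg _ _ ht)).symm
  have hmem : ∀ x : E, x ∈ (⋃ a ∈ T, s a) ↔ G x < 1 := by
    intro x
    rw [hG]
    simp only
    rw [Finset.inf'_lt_iff]
    constructor
    · intro hx
      rw [mem_iUnion₂] at hx
      obtain ⟨a, ha, hxa⟩ := hx
      exact ⟨a, ha, gauge_lt_one_of_mem_of_isOpen (hopen a ha) hxa⟩
    · rintro ⟨a, ha, hlt⟩
      rw [mem_iUnion₂]
      refine ⟨a, ha, ?_⟩
      have heq := gauge_lt_one_eq_self_of_isOpen (hconv a ha) (h0 a ha) (hopen a ha)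
      have : x ∈ {y | gauge (s a) y < 1} := hlt
      rwa [heq] at this
  refine ⟨{
      toFun := fun x => (1 - G x)⁻¹ • (x : E)
      invFun := fun y => ⟨(1 + G y)⁻¹ • y, ?_⟩
      left_inv := ?_
      right_inv := ?_
      continuous_toFun := ?_
      continuous_invFun := ?_ }⟩
  · -- membership of the inverse
    rw [hmem, hGsmul _ (inv_nonneg.2 (by linarith [hGnonneg y])), inv_mul_eq_div,
      div_lt_one (by linarith [hGnonneg y])]
    linarith
  · rintro ⟨x, hx⟩
    have hg1 : G x < 1 := (hmem x).1 hx
    have h1g : (0 : ℝ) < 1 - G x := by linarith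
    apply Subtype.ext
    simp only
    rw [hGsmul _ (inv_nonneg.2 h1g.le) x, smul_smul]
    have hscal : (1 + (1 - G x)⁻¹ * G x)⁻¹ * (1 - G x)⁻¹ = 1 := by
      have h2 : 1 + (1 - G x)⁻¹ * G x = (1 - G x)⁻¹ := by
        field_simp
        ring
      rw [h2, inv_inv]
      exact mul_inv_cancel₀ h1g.ne'
    rw [hscal, one_smul]
  · intro y
    have hm : 0 ≤ G y := hGnonneg y
    have hm1 : (0 : ℝ) < 1 + G y := by linarith
    simp only
    rw [hGsmul _ (inv_nonneg.2 hm1.le) y, smul_smul]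
    have hscal : (1 - (1 + G y)⁻¹ * G y)⁻¹ * (1 + G y)⁻¹ = 1 := by
      have h2 : 1 - (1 + G y)⁻¹ * G y = (1 + G y)⁻¹ := by
        field_simp
        ring
      rw [h2, inv_inv]
      exact mul_inv_cancel₀ hm1.ne'
    rw [hscal, one_smul]
  · have : Continuous fun x : ↥(⋃ a ∈ T, s a) => (1 - G (x : E))⁻¹ • (x : E) := by
      refine Continuous.smul ?_ continuous_subtype_val
      refine Continuous.inv₀ (continuous_const.sub (hGcont.comp continuous_subtype_val)) ?_
      rintro ⟨x, hx⟩
      have : G x < 1 := (hmem x).1 hx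
      simp only
      intro h
      linarith [sub_eq_zero.1 h]
    exact this
  · refine Continuous.subtype_mk ?_ _
    refine Continuous.smul ?_ continuous_id
    refine Continuous.inv₀ (continuous_const.add hGcont) ?_
    intro y
    have := hGnonneg y
    intro h
    linarith [h]

/-- If `i ∈ I^j`, then `Ω^j_{ℓ+1}(i)`, being a union of at most `2ⁿ` open axis-aligned
hyperrectangles `∏_k (ξ_{ī_k}, ξ_{ī_k+p_k+1})` with `0 ≤ ī − i ≤ 1` componentwise, all of
which contain the common open box `∏_k (ξ_{i_k+1}, ξ_{i_k+2})`, is open and star-shaped, and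
hence homeomorphic to an open `n`-ball. -/
theorem stmt_13 {n : ℕ}
    (ξ : Fin n → ℤ → ℝ) (p : Fin n → ℕ)
    (hmono : ∀ k, Monotone (ξ k)) (hp : ∀ k, 1 ≤ p k)
    (hmult : ∀ k t, ξ k t < ξ k (t + p k + 1))
    (supp0 : (Fin n → ℤ) → Set (Fin n → ℝ))
    (hsupp0 : ∀ a : Fin n → ℤ,
      supp0 a = Set.univ.pi fun k => Set.Ioo (ξ k (a k)) (ξ k (a k + p k + 1)))
    (Ω' : Set (Fin n → ℝ))
    (j i : Fin n → ℤ) (hj : ∀ k, j k = 0 ∨ j k = 1)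
    (hi : i ∈ {i' : Fin n → ℤ | ∃ a : Fin n → ℤ, supp0 a ⊆ Ω' ∧
          ∀ k, j k - 1 ≤ i' k - a k ∧ i' k - a k ≤ 0})
    (Kbox : Set (Fin n → ℝ))
    (hKbox : Kbox = Set.univ.pi fun k => Set.Ioo (ξ k (i k + 1)) (ξ k (i k + 2)))
    (hKne : Kbox.Nonempty)
    (U : Set (Fin n → ℝ))
    (hU : U = ⋃ a ∈ {a : Fin n → ℤ | supp0 a ⊆ Ω' ∧
            ∀ k, 0 ≤ a k - i k ∧ a k - i k ≤ 1 - j k}, supp0 a) :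
    IsOpen U ∧ (∀ x ∈ Kbox, StarConvex ℝ x U) ∧
    Nonempty (↥U ≃ₜ ↥(Metric.ball (0 : EuclideanSpace ℝ (Fin n)) 1)) := by
  obtain ⟨c, hc⟩ := hKne
  set A : Set (Fin n → ℤ) := {a : Fin n → ℤ | supp0 a ⊆ Ω' ∧
      ∀ k, 0 ≤ a k - i k ∧ a k - i k ≤ 1 - j k} with hAdef
  -- every box in the union contains the common box
  have hKsub : ∀ a ∈ A, Kbox ⊆ supp0 a := by
    rintro a ⟨-, hak⟩
    rw [hKbox, hsupp0]
    refine Set.pi_mono fun k _ => ?_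
    refine Set.Ioo_subset_Ioo (hmono k ?_) (hmono k ?_)
    · rcases hj k with h0 | h1 <;> [skip; skip] <;>
        (have := (hak k).2; omega)
    · have h1 := (hak k).1
      have h2 := hp k
      omega
  have hopenBox : ∀ a : Fin n → ℤ, IsOpen (supp0 a) := by
    intro a
    rw [hsupp0]
    exact isOpen_set_pi Set.finite_univ fun k _ => isOpen_Ioo
  have hconvBox : ∀ a : Fin n → ℤ, Convex ℝ (supp0 a) := by
    intro a
    rw [hsupp0]
    exact convex_pi fun k _ => convex_Ioo _ _
  have hUopen : IsOpen U := by
    rw [hU]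
    exact isOpen_biUnion fun a _ => hopenBox a
  refine ⟨hUopen, ?_, ?_⟩
  · -- star-shaped
    intro x hx y hy a b ha hb hab
    rw [hU] at hy ⊢
    rw [Set.mem_iUnion₂] at hy
    obtain ⟨a', ha', hya'⟩ := hy
    exact Set.mem_biUnion ha'
      (((hconvBox a').starConvex (hKsub a' ha' hx)) hya' ha hb hab)
  · -- homeomorphic to a ball
    have hAfin : A.Finite := by
      refine Set.Finite.subset (Set.Finite.pi fun k => Set.finite_Icc (i k) (i k + 1)) ?_
      rintro a ⟨-, hak⟩
      rw [Set.mem_univ_pi]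
      intro k
      rcases hj k with h0 | h1 <;> (have := hak k; simp only [Set.mem_Icc]; omega)
    have hAne : A.Nonempty := by
      obtain ⟨a0, ha0Ω, ha0k⟩ := hi
      exact ⟨a0, ha0Ω, fun k => by have := ha0k k; omega⟩
    set T : Finset (Fin n → ℤ) := hAfin.toFinset with hTdef
    have hT : T.Nonempty := by rwa [hTdef, Set.Finite.toFinset_nonempty]
    have hTA : ∀ a, a ∈ T ↔ a ∈ A := fun a => hAfin.mem_toFinset
    -- translated boxes
    set s' : (Fin n → ℤ) → Set (Fin n → ℝ) := fun a => (fun y => y + c) ⁻¹' supp0 a with hs'def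
    have hs'box : ∀ a : Fin n → ℤ, s' a =
        Set.univ.pi fun k => Set.Ioo (ξ k (a k) - c k) (ξ k (a k + p k + 1) - c k) := by
      intro a
      ext y
      simp only [hs'def, Set.mem_preimage, hsupp0, Set.mem_pi, Set.mem_univ, forall_true_left,
        Set.mem_Ioo, Pi.add_apply, true_implies]
      constructor <;> (intro h k; obtain ⟨h1, h2⟩ := h k; constructor <;> linarith)
    have hW := aux_starUnion_homeo T hT s'
      (fun a _ => by rw [hs'box]; exact isOpen_set_pi Set.finite_univ fun k _ => isOpen_Ioo)
      (fun a _ => by rw [hs'box]; exact convex_pi fun k _ => convex_Ioo _ _)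
      (fun a ha => by
        have hcs : c ∈ supp0 a := hKsub a ((hTA a).1 ha) hc
        simp only [hs'def, Set.mem_preimage, zero_add]
        exact hcs)
    obtain ⟨e⟩ := hW
    -- relate the union of translated boxes to U
    have hWU : (⋃ a ∈ T, s' a) = (fun y => y + c) ⁻¹' U := by
      rw [hU]
      ext y
      simp only [Set.mem_iUnion, Set.mem_preimage, hs'def, hTA]
    have himg : ⇑(Homeomorph.addRight c) '' (⋃ a ∈ T, s' a) = U := by
      rw [hWU]
      have : ⇑(Homeomorph.addRight c) ⁻¹' U = (fun y => y + c) ⁻¹' U := rfl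
      rw [← this, Homeomorph.image_preimage]
    have e1 : ↥U ≃ₜ ↥(⋃ a ∈ T, s' a) :=
      ((Homeomorph.addRight c).image (⋃ a ∈ T, s' a)).trans (Homeomorph.setCongr himg) |>.symm
    exact ⟨e1.trans <| e.trans <|
      ((EuclideanSpace.equiv (Fin n) ℝ).symm.toHomeomorph.trans Homeomorph.unitBall)⟩
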